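/- Let L be a self-adjoint operator on a finite-dimensional Hilbert space with ⟨A, L(A)⟩ ≤ 0 for all A, and suppose A is a unit vector with -⟨A, L(A)⟩ ≤ ε. Then for all t ≥ 0, ⟨A, e^{Lt}(A)⟩ ≥ e^{-εt}. -/

import Mathlib

open scoped InnerProductSpace

open NormedSpace in
lemma exp_apply_eigen {E : Type*} [NormedAddCommGroup E] [NormedSpace ℝ E]
    [CompleteSpace E] (T : E →L[ℝ] E) (v : E) (μ : ℝ) (h : T v = μ • v) :
    NormedSpace.exp T v = Real.exp μ • v := by
  have hpow : ∀ n : ℕ, (T ^ n) v = μ ^ n • v := by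
    intro n
    induction n with
    | zero => simp
    | succ n ih =>
      rw [pow_succ, ContinuousLinearMap.mul_apply, h, map_smul, ih, smul_smul,
        mul_comm, ← pow_succ]
  have hsum : Summable fun n : ℕ => ((Nat.factorial n : ℝ))⁻¹ • T ^ n :=
    NormedSpace.expSeries_summable' (𝕂 := ℝ) T
  have := (ContinuousLinearMap.apply ℝ E v).map_tsum hsum
  rw [NormedSpace.exp_eq_tsum ℝ]
  simp only [ContinuousLinearMap.apply_apply] at this
  rw [this]
  have : ∀ n : ℕ, (((Nat.factorial n : ℝ))⁻¹ • T ^ n) v = (μ ^ n / (Nat.factorial n : ℝ)) • v := by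
    intro n
    rw [ContinuousLinearMap.smul_apply, hpow, smul_smul, div_eq_inv_mul]
  simp_rw [this]
  rw [(Real.summable_pow_div_factorial μ).tsum_smul_const]
  congr 1
  rw [Real.exp_eq_exp_ℝ, NormedSpace.exp_eq_tsum_div]

/-- If `L` is self-adjoint and negative semidefinite, `⟨A,A⟩ = 1` and
`-⟨A, L A⟩ ≤ ε`, then the autocorrelation satisfies
`⟨A, e^{Lt} A⟩ ≥ e^{-εt}` for all `t ≥ 0`. -/
theorem stmt11 {E : Type*} [NormedAddCommGroup E] [InnerProductSpace ℝ E]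
    [FiniteDimensional ℝ E] (L : E →L[ℝ] E)
    (hsa : ∀ x y : E, ⟪L x, y⟫_ℝ = ⟪x, L y⟫_ℝ)
    (hneg : ∀ x : E, ⟪x, L x⟫_ℝ ≤ 0)
    (A : E) (hA : ⟪A, A⟫_ℝ = 1) (ε : ℝ) (hε : -⟪A, L A⟫_ℝ ≤ ε) :
    ∀ t : ℝ, 0 ≤ t → Real.exp (-ε * t) ≤ ⟪A, (NormedSpace.exp (t • L)) A⟫_ℝ := by
  intro t ht
  classical
  set n := Module.finrank ℝ E with hn
  have hT : (L : E →ₗ[ℝ] E).IsSymmetric := fun x y => hsa x y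
  set b := hT.eigenvectorBasis rfl with hb
  set μ := hT.eigenvalues (n := n) rfl with hμ
  set c : Fin n → ℝ := fun i => ⟪b i, A⟫_ℝ with hc
  have heig : ∀ i, L (b i) = μ i • b i := fun i => hT.apply_eigenvectorBasis rfl i
  -- expansion of A
  have hArep : ∑ i, c i • b i = A := b.sum_repr' A
  -- sum of squares of coefficients is 1
  have hcsum : ∑ i, c i * c i = 1 := by
    have := b.sum_inner_mul_inner A A
    rw [hA] at this
    simpa [hc, real_inner_comm] using this
  -- inner product with L A
  have hinner : ∀ (f : Fin n → ℝ), ⟪A, ∑ i, (f i * c i) • b i⟫_ℝ = ∑ i, f i * (c i * c i) := by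
    intro f
    rw [inner_sum]
    refine Finset.sum_congr rfl fun i _ => ?_
    rw [real_inner_smul_right]
    have : ⟪A, b i⟫_ℝ = c i := by rw [hc, real_inner_comm]
    rw [this]; ring
  have hLA : L A = ∑ i, (μ i * c i) • b i := by
    rw [← hArep, map_sum]
    refine Finset.sum_congr rfl fun i _ => ?_
    rw [map_smul, heig, smul_smul, mul_comm]
  have hALA : ⟪A, L A⟫_ℝ = ∑ i, μ i * (c i * c i) := by rw [hLA, hinner]
  -- exp applied
  have hexp : (NormedSpace.exp (t • L)) A = ∑ i, (Real.exp (t * μ i) * c i) • b i := by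
    rw [← hArep, map_sum]
    refine Finset.sum_congr rfl fun i _ => ?_
    rw [map_smul, exp_apply_eigen (t • L) (b i) (t * μ i)
      (by rw [ContinuousLinearMap.smul_apply, heig, smul_smul]), smul_smul, mul_comm]
  have hmain : ⟪A, (NormedSpace.exp (t • L)) A⟫_ℝ = ∑ i, Real.exp (t * μ i) * (c i * c i) := by
    rw [hexp, hinner]
  rw [hmain]
  -- Jensen
  have hw : ∀ i ∈ Finset.univ, (0 ≤ c i * c i) := fun i _ => mul_self_nonneg _
  have hjensen := convexOn_exp.map_sum_le (t := Finset.univ) (w := fun i => c i * c i)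
    (p := fun i => t * μ i) hw hcsum (fun i _ => Set.mem_univ _)
  have h1 : Real.exp (-ε * t) ≤ Real.exp (∑ i, (c i * c i) • (t * μ i)) := by
    apply Real.exp_le_exp.mpr
    have : ∑ i, (c i * c i) • (t * μ i) = t * ∑ i, μ i * (c i * c i) := by
      rw [Finset.mul_sum]
      exact Finset.sum_congr rfl fun i _ => by simp [smul_eq_mul]; ring
    rw [this, ← hALA]
    have h2 : -ε ≤ ⟪A, L A⟫_ℝ := by linarith
    calc -ε * t = t * (-ε) := by ring
    _ ≤ t * ⟪A, L A⟫_ℝ := mul_le_mul_of_nonneg_left h2 ht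
  refine h1.trans (hjensen.trans_eq ?_)
  exact Finset.sum_congr rfl fun i _ => by rw [smul_eq_mul, mul_comm]
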